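/- With the setup of the one-step DDIM inversion/generation (α₀, α₁ > 0, ε_C, ε_∅ ∈ ℝⁿ, ε'(w) = w·ε_C + (1−w)·ε_∅, z₁ defined from z₀ via scale w_i and z₀' defined from z₁ via scale w_g), the reconstruction error satisfies ‖z₀ − z₀'‖ = √α₀ · |√(1/α₁ − 1) − √(1/α₀ − 1)| · |w_g − w_i| · ‖ε_C − ε_∅‖. -/
import Mathlib


/-- Quantitative Proposition 2: the one-step reconstruction error equals
√α₀ · |√(1/α₁ − 1) − √(1/α₀ − 1)| · |w_g − w_i| · ‖ε_C − ε_∅‖. -/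
theorem stmt_8 {n : ℕ} (α₀ α₁ : ℝ) (hα₀ : 0 < α₀) (hα₁ : 0 < α₁)
    (εC εE z₀ : EuclideanSpace ℝ (Fin n)) (wi wg : ℝ)
    (ε' : ℝ → EuclideanSpace ℝ (Fin n))
    (hε' : ∀ w, ε' w = w • εC + (1 - w) • εE)
    (z₁ : EuclideanSpace ℝ (Fin n))
    (hz₁ : z₁ = Real.sqrt (α₁ / α₀) • z₀ +
      (Real.sqrt α₁ * (Real.sqrt (1 / α₁ - 1) - Real.sqrt (1 / α₀ - 1))) • ε' wi)
    (z₀' : EuclideanSpace ℝ (Fin n))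
    (hz₀' : z₀' = Real.sqrt (α₀ / α₁) • z₁ +
      (Real.sqrt α₀ * (Real.sqrt (1 / α₀ - 1) - Real.sqrt (1 / α₁ - 1))) • ε' wg) :
    ‖z₀ - z₀'‖ = Real.sqrt α₀ * |Real.sqrt (1 / α₁ - 1) - Real.sqrt (1 / α₀ - 1)| *
      |wg - wi| * ‖εC - εE‖ := by
  set Δ := Real.sqrt (1 / α₁ - 1) - Real.sqrt (1 / α₀ - 1) with hΔ
  have h1 : Real.sqrt (α₀ / α₁) * Real.sqrt (α₁ / α₀) = 1 := by
    rw [← Real.sqrt_mul (by positivity)]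
    rw [show α₀ / α₁ * (α₁ / α₀) = 1 by field_simp]
    exact Real.sqrt_one
  have h2 : Real.sqrt (α₀ / α₁) * Real.sqrt α₁ = Real.sqrt α₀ := by
    rw [← Real.sqrt_mul (by positivity)]
    congr 1
    field_simp
  have key : z₀ - z₀' = (Real.sqrt α₀ * Δ * (wg - wi)) • (εC - εE) := by
    rw [hz₀', hz₁, hε' wi, hε' wg]
    rw [smul_add, smul_smul, smul_smul, h1]
    have h3 : Real.sqrt (α₀ / α₁) * (Real.sqrt α₁ * Δ) = Real.sqrt α₀ * Δ := by
      rw [← mul_assoc, h2]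
    rw [h3]
    have h4 : Real.sqrt α₀ * (Real.sqrt (1 / α₀ - 1) - Real.sqrt (1 / α₁ - 1))
        = -(Real.sqrt α₀ * Δ) := by rw [hΔ]; ring
    rw [h4]
    module
  rw [key, norm_smul]
  rw [Real.norm_eq_abs, abs_mul, abs_mul, abs_of_nonneg (Real.sqrt_nonneg _)]
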